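/- arXiv:1402.6115 — 9 statements merged into one kernel-verified Lean document; each statement's English description precedes it below -/
import Mathlib

section
/- Any element of a group G = ⟨X⟩ which is conjugate to a product of n palindromes (n ≥ 1) is itself a product of n palindromes if n is even, and a product of n+1 palindromes if n is odd. -/
/-- An element `g` of a group `G` is a palindrome with respect to a generating set `X`
if it is represented by a word in the alphabet `X^{±1}` that equals its own reversal. -/
def IsPalindrome {G : Type*} [Group G] (X : Set G) (g : G) : Prop :=
  ∃ w : List G, (∀ x ∈ w, x ∈ X ∨ x⁻¹ ∈ X) ∧ w.reverse = w ∧ w.prod = g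

/-- `g` is a product of `k` palindromes with respect to `X`. -/
def IsProdOfPalindromes {G : Type*} [Group G] (X : Set G) (k : ℕ) (g : G) : Prop :=
  ∃ l : List G, l.length = k ∧ (∀ p ∈ l, IsPalindrome X p) ∧ l.prod = g

lemma pal_inv {G : Type*} [Group G] {X : Set G} {p : G} (hp : IsPalindrome X p) :
    IsPalindrome X p⁻¹ := by
  obtain ⟨w, hw1, hw2, hw3⟩ := hp
  refine ⟨(w.map (·⁻¹)).reverse, ?_, ?_, ?_⟩
  · intro x hx
    simp only [List.mem_reverse, List.mem_map] at hx
    obtain ⟨y, hy, rfl⟩ := hx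
    rcases hw1 y hy with h | h
    · exact Or.inr (by simpa using h)
    · exact Or.inl h
  · rw [List.reverse_reverse, ← List.map_reverse, hw2]
  · rw [← hw3, List.prod_inv_reverse]

lemma pal_sandwich {G : Type*} [Group G] {X : Set G} {p : G} (hp : IsPalindrome X p)
    {w : List G} (hw : ∀ x ∈ w, x ∈ X ∨ x⁻¹ ∈ X) :
    IsPalindrome X (w.reverse.prod * p * w.prod) := by
  obtain ⟨u, hu1, hu2, hu3⟩ := hp
  refine ⟨w.reverse ++ u ++ w, ?_, ?_, ?_⟩
  · intro x hx
    simp only [List.mem_append, List.mem_reverse] at hx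
    rcases hx with (h | h) | h
    · exact hw x h
    · exact hu1 x h
    · exact hw x h
  · simp [List.reverse_append, hu2, List.append_assoc]
  · simp [hu3, mul_assoc]

lemma pal_one {G : Type*} [Group G] (X : Set G) : IsPalindrome X 1 :=
  ⟨[], by simp, by simp, by simp⟩

lemma even_step {G : Type*} [Group G] {X : Set G}
    {w : List G} (hw : ∀ x ∈ w, x ∈ X ∨ x⁻¹ ∈ X) (h : G) (hh : w.prod = h) :
    ∀ m : ℕ, ∀ g : G, IsProdOfPalindromes X (2 * m) g →
      IsProdOfPalindromes X (2 * m) (h⁻¹ * g * h) := by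
  intro m
  induction m with
  | zero =>
    intro g hg
    obtain ⟨l, hl, -, hlp⟩ := hg
    rw [List.length_eq_zero_iff] at hl
    subst hl
    simp only [List.prod_nil] at hlp
    exact ⟨[], by simp, by simp, by simp [← hlp]⟩
  | succ m ih =>
    intro g hg
    obtain ⟨l, hl, hpal, hlp⟩ := hg
    rcases l with _ | ⟨p1, _ | ⟨p2, rest⟩⟩
    · exact absurd hl (by simp)
    · exact absurd hl (by simp; omega)
    · simp only [List.length_cons] at hl
      have hrest : IsProdOfPalindromes X (2 * m) rest.prod :=
        ⟨rest, by omega, fun p hp => hpal p (by simp [hp]), rfl⟩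
      obtain ⟨l', hl', hpal', hlp'⟩ := ih rest.prod hrest
      set h' := w.reverse.prod with hh'
      have ha : IsPalindrome X (h⁻¹ * p1 * h'⁻¹) := by
        have := pal_sandwich (pal_inv (hpal p1 (by simp))) hw
        rw [hh] at this
        have := pal_inv this
        simpa [mul_assoc] using this
      have hb : IsPalindrome X (h' * p2 * h) := by
        have := pal_sandwich (hpal p2 (by simp [List.mem_cons])) hw
        rwa [hh] at this
      refine ⟨(h⁻¹ * p1 * h'⁻¹) :: (h' * p2 * h) :: l', by simp; omega, ?_, ?_⟩
      · intro p hp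
        simp only [List.mem_cons] at hp
        rcases hp with rfl | rfl | hp
        · exact ha
        · exact hb
        · exact hpal' p hp
      · simp only [List.prod_cons, hlp']
        rw [← hlp]
        simp only [List.prod_cons]
        group

theorem conj_prod_palindromes {G : Type*} [Group G] (X : Set G)
    (hX : Subgroup.closure X = ⊤) (n : ℕ) (hn : 1 ≤ n) (g h : G)
    (hg : IsProdOfPalindromes X n g) :
    (Even n → IsProdOfPalindromes X n (h⁻¹ * g * h)) ∧
    (Odd n → IsProdOfPalindromes X (n + 1) (h⁻¹ * g * h)) := by
  have hmem : h ∈ Subgroup.closure X := by rw [hX]; trivial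
  have hmem' : h ∈ Submonoid.closure (X ∪ X⁻¹) := by
    have := Subgroup.closure_toSubmonoid X
    rw [← SetLike.mem_coe, ← Subgroup.coe_toSubmonoid, this] at hmem
    exact hmem
  obtain ⟨w, hw', hh⟩ := Submonoid.exists_list_of_mem_closure hmem'
  have hw : ∀ x ∈ w, x ∈ X ∨ x⁻¹ ∈ X := by
    intro x hx
    rcases hw' x hx with h | h
    · exact Or.inl h
    · exact Or.inr h
  constructor
  · rintro ⟨m, hm⟩
    have : n = 2 * m := by omega
    subst this
    exact even_step hw h hh m g hg
  · rintro ⟨m, hm⟩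
    subst hm
    obtain ⟨l, hl, hpal, hlp⟩ := hg
    rcases l with _ | ⟨p1, rest⟩
    · simp at hl
    · simp only [List.length_cons] at hl
      have hrest : IsProdOfPalindromes X (2 * m) rest.prod :=
        ⟨rest, by omega, fun p hp => hpal p (by simp [hp]), rfl⟩
      obtain ⟨l', hl', hpal', hlp'⟩ := even_step hw h hh m rest.prod hrest
      set h' := w.reverse.prod with hh'
      have ha : IsPalindrome X (h⁻¹ * p1 * h'⁻¹) := by
        have := pal_sandwich (pal_inv (hpal p1 (by simp))) hw
        rw [hh] at this
        have := pal_inv this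
        simpa [mul_assoc] using this
      have hc : IsPalindrome X (h' * h) := by
        have := pal_sandwich (pal_one X) hw
        rw [hh] at this
        simpa using this
      refine ⟨(h⁻¹ * p1 * h'⁻¹) :: (h' * h) :: l', by simp; omega, ?_, ?_⟩
      · intro p hp
        simp only [List.mem_cons] at hp
        rcases hp with rfl | rfl | hp
        · exact ha
        · exact hc
        · exact hpal' p hp
      · simp only [List.prod_cons, hlp']
        rw [← hlp]
        simp only [List.prod_cons]
        group
end

section
/- In a group G = ⟨X⟩, any commutator [u, p] = u^{-1}p^{-1}up with p a palindrome is a product of at most 3 palindromes. -/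
lemma IsPalindrome.inv {G : Type*} [Group G] {X : Set G} {g : G}
    (h : IsPalindrome X g) : IsPalindrome X g⁻¹ := by
  obtain ⟨w, hw, hrev, hprod⟩ := h
  refine ⟨w.map (·⁻¹), ?_, ?_, ?_⟩
  · intro x hx
    obtain ⟨y, hy, rfl⟩ := List.mem_map.mp hx
    rcases hw y hy with h | h
    · exact Or.inr (by simpa using h)
    · exact Or.inl h
  · rw [← List.map_reverse, hrev]
  · rw [← hprod, List.prod_inv_reverse, ← List.map_reverse, hrev]

open scoped commutatorElement

theorem commutator_palindrome_three {G : Type*} [Group G] (X : Set G)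
    (hX : Subgroup.closure X = ⊤) (u p : G) (hp : IsPalindrome X p) :
    ∃ k ≤ 3, IsProdOfPalindromes X k ⁅u, p⁆ := by
  obtain ⟨q, hq, hqrev, hqprod⟩ := hp
  have hu : u ∈ Subgroup.closure X := hX ▸ Subgroup.mem_top u
  have hu2 : u ∈ Submonoid.closure (X ∪ X⁻¹) := by
    rw [← Subgroup.closure_toSubmonoid]; exact hu
  obtain ⟨w, hw', hwprod⟩ := Submonoid.exists_list_of_mem_closure hu2
  have hw : ∀ x ∈ w, x ∈ X ∨ x⁻¹ ∈ X := by
    intro x hx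
    rcases hw' x hx with h | h
    · exact Or.inl h
    · exact Or.inr (Set.mem_inv.mp h)
  set v : G := w.reverse.prod with hv
  have pal1 : IsPalindrome X (u * p * v) := by
    refine ⟨w ++ q ++ w.reverse, ?_, ?_, ?_⟩
    · intro x hx
      simp only [List.mem_append, List.mem_reverse] at hx
      rcases hx with (hx | hx) | hx
      · exact hw x hx
      · exact hq x hx
      · exact hw x hx
    · simp [List.reverse_append, hqrev, List.append_assoc]
    · simp [List.prod_append, hwprod, hqprod, hv, mul_assoc]
  have pal2 : IsPalindrome X (u * v) := by
    refine ⟨w ++ w.reverse, ?_, ?_, ?_⟩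
    · intro x hx
      simp only [List.mem_append, List.mem_reverse] at hx
      rcases hx with hx | hx <;> exact hw x hx
    · simp
    · simp [List.prod_append, hwprod, hv]
  refine ⟨3, le_refl 3, ⟨[u * p * v, (u * v)⁻¹, p⁻¹], rfl, ?_, ?_⟩⟩

  · intro x hx
    simp only [List.mem_cons, List.not_mem_nil, or_false] at hx
    rcases hx with rfl | rfl | rfl
    · exact pal1
    · exact pal2.inv
    · exact IsPalindrome.inv ⟨q, hq, hqrev, hqprod⟩
  · simp only [List.prod_cons, List.prod_nil, mul_one]
    group
end

section
/- In a group G = ⟨X⟩, any commutator [u, pq] with p and q palindromes is a product of at most 4 palindromes. -/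
open scoped commutatorElement

theorem commutator_two_palindromes_four {G : Type*} [Group G] (X : Set G)
    (hX : Subgroup.closure X = ⊤) (u p q : G)
    (hp : IsPalindrome X p) (hq : IsPalindrome X q) :
    ∃ k ≤ 4, IsProdOfPalindromes X k ⁅u, p * q⁆ := by
  obtain ⟨pw, hpX, hpr, hpp⟩ := hp
  obtain ⟨qw, hqX, hqr, hqp⟩ := hq
  -- get a word for u
  have hu : u ∈ Submonoid.closure (X ∪ X⁻¹) := by
    rw [← Subgroup.closure_toSubmonoid, hX]; trivial
  obtain ⟨w, hwX, hwp⟩ := Submonoid.exists_list_of_mem_closure hu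
  have hwX' : ∀ x ∈ w, x ∈ X ∨ x⁻¹ ∈ X := by
    intro x hx
    rcases hwX x hx with h | h
    · exact Or.inl h
    · exact Or.inr (Set.mem_inv.mp h)
  set v : List G := w.map (·⁻¹) with hv
  have hvX : ∀ x ∈ v, x ∈ X ∨ x⁻¹ ∈ X := by
    intro x hx
    simp only [hv, List.mem_map] at hx
    obtain ⟨y, hy, rfl⟩ := hx
    rcases hwX' y hy with h | h
    · exact Or.inr (by simpa using h)
    · exact Or.inl h
  have hvp : v.reverse.prod = u⁻¹ := by
    rw [hv, ← List.prod_inv_reverse, hwp]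
  -- inverse of a palindrome word
  have inv_pal : ∀ (aw : List G), aw.reverse = aw →
      (aw.map (·⁻¹)).reverse = aw.map (·⁻¹) ∧ (aw.map (·⁻¹)).prod = aw.prod⁻¹ := by
    intro aw har
    have h1 : (aw.map (·⁻¹)).reverse = aw.map (·⁻¹) := by
      rw [← List.map_reverse, har]
    constructor
    · exact h1
    · rw [← h1, ← List.prod_inv_reverse]
  refine ⟨4, le_refl 4,
    [(w ++ pw ++ w.reverse).prod, (v ++ qw ++ v.reverse).prod,
      (qw.map (·⁻¹)).prod, (pw.map (·⁻¹)).prod], rfl, ?_, ?_⟩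
  · intro r hr
    simp only [List.mem_cons, List.not_mem_nil, or_false] at hr
    rcases hr with rfl | rfl | rfl | rfl
    · refine ⟨w ++ pw ++ w.reverse, ?_, ?_, rfl⟩
      · intro x hx
        simp only [List.mem_append, List.mem_reverse] at hx
        rcases hx with (hx | hx) | hx
        exacts [hwX' x hx, hpX x hx, hwX' x hx]
      · simp [List.reverse_append, hpr, List.append_assoc]
    · refine ⟨v ++ qw ++ v.reverse, ?_, ?_, rfl⟩
      · intro x hx
        simp only [List.mem_append, List.mem_reverse] at hx
        rcases hx with (hx | hx) | hx
        exacts [hvX x hx, hqX x hx, hvX x hx]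
      · simp [List.reverse_append, hqr, List.append_assoc]
    · refine ⟨qw.map (·⁻¹), ?_, (inv_pal qw hqr).1, rfl⟩
      intro x hx
      simp only [List.mem_map] at hx
      obtain ⟨y, hy, rfl⟩ := hx
      rcases hqX y hy with h | h
      · exact Or.inr (by simpa using h)
      · exact Or.inl h
    · refine ⟨pw.map (·⁻¹), ?_, (inv_pal pw hpr).1, rfl⟩
      intro x hx
      simp only [List.mem_map] at hx
      obtain ⟨y, hy, rfl⟩ := hx
      rcases hpX y hy with h | h
      · exact Or.inr (by simpa using h)
      · exact Or.inl h
  · have h3 := (inv_pal qw hqr).2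
    have h4 := (inv_pal pw hpr).2
    have hvprod : v.prod = w.reverse.prod⁻¹ := by
      rw [hv, List.prod_inv_reverse, List.map_reverse, List.reverse_reverse]
    simp only [List.prod_cons, List.prod_nil, List.prod_append, hpp, hqp, hwp, h3, h4,
      hvprod, hvp, mul_one]
    rw [commutatorElement_def]
    group
end

section
/- If q = p1·p2 is a product of two palindromes in a group G = ⟨X⟩, then for every integer m, the element q^m is also a product of two palindromes. -/
section Aux

variable {G : Type*} [Group G] (X : Set G)

lemma pal_one_s5 : IsPalindrome X 1 :=
  ⟨[], by simp, by simp, by simp⟩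

lemma pal_inv_s5 {g : G} (h : IsPalindrome X g) : IsPalindrome X g⁻¹ := by
  obtain ⟨w, hw, hrev, hprod⟩ := h
  refine ⟨w.map (·⁻¹), ?_, ?_, ?_⟩
  · intro x hx
    simp only [List.mem_map] at hx
    obtain ⟨y, hy, rfl⟩ := hx
    rcases hw y hy with h1 | h1
    · right; simpa using h1
    · left; exact h1
  · rw [← List.map_reverse, hrev]
  · have h1 : (w.map (·⁻¹)).prod = ((w.map (·⁻¹)).reverse).prod := by
      rw [← List.map_reverse, hrev]
    rw [h1, ← List.prod_inv_reverse, hprod]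

/-- alternating word w₁, then n copies of (w₂ ++ w₁), built as w₁ ++ w₂ ++ (prev). -/
def altWord (w₁ w₂ : List G) : ℕ → List G
  | 0 => w₁
  | n + 1 => w₁ ++ w₂ ++ altWord w₁ w₂ n

lemma altWord_shift (w₁ w₂ : List G) (n : ℕ) :
    w₁ ++ w₂ ++ altWord w₁ w₂ n = altWord w₁ w₂ n ++ w₂ ++ w₁ := by
  induction n with
  | zero => simp [altWord]
  | succ n ih =>
    simp only [altWord, List.append_assoc] at ih ⊢
    rw [ih]

lemma altWord_reverse (w₁ w₂ : List G) (h1 : w₁.reverse = w₁) (h2 : w₂.reverse = w₂)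
    (n : ℕ) : (altWord w₁ w₂ n).reverse = altWord w₁ w₂ n := by
  induction n with
  | zero => simpa [altWord]
  | succ n ih =>
    show (w₁ ++ w₂ ++ altWord w₁ w₂ n).reverse = _
    rw [List.reverse_append, List.reverse_append, h1, h2, ih, ← List.append_assoc,
      ← altWord_shift]
    rfl

lemma altWord_prod (w₁ w₂ : List G) (n : ℕ) :
    (altWord w₁ w₂ n).prod = w₁.prod * (w₂.prod * w₁.prod) ^ n := by
  induction n with
  | zero => simp [altWord]
  | succ n ih =>
    show (w₁ ++ w₂ ++ altWord w₁ w₂ n).prod = _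
    rw [List.prod_append, List.prod_append, ih, pow_succ' (w₂.prod * w₁.prod) n]
    simp [mul_assoc]

lemma altWord_mem (w₁ w₂ : List G) (h1 : ∀ x ∈ w₁, x ∈ X ∨ x⁻¹ ∈ X)
    (h2 : ∀ x ∈ w₂, x ∈ X ∨ x⁻¹ ∈ X) (n : ℕ) :
    ∀ x ∈ altWord w₁ w₂ n, x ∈ X ∨ x⁻¹ ∈ X := by
  induction n with
  | zero => exact h1
  | succ n ih =>
    intro x hx
    rcases List.mem_append.mp hx with hx | hx
    · rcases List.mem_append.mp hx with hx | hx
      · exact h1 x hx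
      · exact h2 x hx
    · exact ih x hx

lemma pal_alt {p₁ p₂ : G} (hp₁ : IsPalindrome X p₁) (hp₂ : IsPalindrome X p₂) (n : ℕ) :
    IsPalindrome X (p₁ * (p₂ * p₁) ^ n) := by
  obtain ⟨w₁, hw₁, hrev₁, hprod₁⟩ := hp₁
  obtain ⟨w₂, hw₂, hrev₂, hprod₂⟩ := hp₂
  exact ⟨altWord w₁ w₂ n, altWord_mem X w₁ w₂ hw₁ hw₂ n,
    altWord_reverse w₁ w₂ hrev₁ hrev₂ n, by rw [altWord_prod, hprod₁, hprod₂]⟩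

lemma prod_two_pow_nat {p₁ p₂ : G} (hp₁ : IsPalindrome X p₁) (hp₂ : IsPalindrome X p₂)
    (n : ℕ) : IsProdOfPalindromes X 2 ((p₁ * p₂) ^ n) := by
  cases n with
  | zero =>
    refine ⟨[1, 1], rfl, ?_, by simp⟩
    intro p hp
    simp only [List.mem_cons, List.not_mem_nil, or_false] at hp
    rcases hp with rfl | rfl
    exacts [pal_one_s5 X, pal_one_s5 X]
  | succ n =>
    refine ⟨[p₁ * (p₂ * p₁) ^ n, p₂], rfl, ?_, ?_⟩
    · intro p hp
      simp only [List.mem_cons, List.not_mem_nil, or_false] at hp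
      rcases hp with rfl | rfl
      exacts [pal_alt X hp₁ hp₂ n, hp₂]
    · show p₁ * (p₂ * p₁) ^ n * (p₂ * 1) = (p₁ * p₂) ^ (n + 1)
      induction n with
      | zero => group
      | succ k ih =>
        rw [mul_one] at ih ⊢
        rw [pow_succ' (p₂ * p₁) k, pow_succ' (p₁ * p₂) (k + 1), ← ih]
        simp [mul_assoc]

end Aux

theorem zpow_of_prod_two_palindromes {G : Type*} [Group G] (X : Set G)
    (hX : Subgroup.closure X = ⊤) (p₁ p₂ : G)
    (hp₁ : IsPalindrome X p₁) (hp₂ : IsPalindrome X p₂) (m : ℤ) :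
    IsProdOfPalindromes X 2 ((p₁ * p₂) ^ m) := by
  rcases m with n | n
  · rw [Int.ofNat_eq_coe, zpow_natCast]
    exact prod_two_pow_nat X hp₁ hp₂ n
  · rw [zpow_negSucc]
    have : ((p₁ * p₂) ^ (n + 1))⁻¹ = (p₂⁻¹ * p₁⁻¹) ^ (n + 1) := by
      rw [← mul_inv_rev, inv_pow]
    rw [this]
    exact prod_two_pow_nat X (pal_inv_s5 X hp₂) (pal_inv_s5 X hp₁) (n + 1)
end

section
/- Let G = ⟨X⟩ be a group, p_1,...,p_k palindromes, and u ∈ G. Then the palindromic length of the commutator [u, p_1 p_2 ⋯ p_k] is at most 2k if k is even and at most 2k+1 if k is odd. -/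
section Aux

variable {G : Type*} [Group G] (X : Set G)

lemma isPalindrome_one : IsPalindrome X (1 : G) :=
  ⟨[], by simp, by simp, by simp⟩

lemma isPalindrome_sandwich {p : G} (hp : IsPalindrome X p)
    {s : List G} (hs : ∀ x ∈ s, x ∈ X ∨ x⁻¹ ∈ X) :
    IsPalindrome X (s.reverse.prod * p * s.prod) := by
  obtain ⟨q, hq1, hq2, hq3⟩ := hp
  refine ⟨s.reverse ++ q ++ s, ?_, ?_, ?_⟩
  · intro x hx
    simp only [List.mem_append, List.mem_reverse] at hx
    rcases hx with (hx | hx) | hx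
    · exact hs x hx
    · exact hq1 x hx
    · exact hs x hx
  · simp [List.reverse_append, hq2, List.append_assoc]
  · simp [List.prod_append, hq3, mul_assoc]

lemma isPalindrome_inv {p : G} (hp : IsPalindrome X p) : IsPalindrome X p⁻¹ := by
  obtain ⟨q, hq1, hq2, hq3⟩ := hp
  refine ⟨q.map fun x => x⁻¹, ?_, ?_, ?_⟩
  · intro x hx
    simp only [List.mem_map] at hx
    obtain ⟨y, hy, rfl⟩ := hx
    rcases hq1 y hy with h | h
    · right; simpa using h
    · left; exact h
  · rw [← List.map_reverse, hq2]
  · rw [← hq3, List.prod_inv_reverse, ← List.map_reverse, hq2]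

/-- key telescoping lemma: `u⁻¹ * l.prod * u` is a product of `l.length`
(or `l.length + 1` if odd) palindromes, where `u` is a word in the generators. -/
lemma conj_prod_palindromes_s6 {w : List G} (hw : ∀ x ∈ w, x ∈ X ∨ x⁻¹ ∈ X) :
    ∀ l : List G, (∀ p ∈ l, IsPalindrome X p) →
      IsProdOfPalindromes X (l.length + (if Even l.length then 0 else 1))
        (w.prod⁻¹ * l.prod * w.prod)
  | [] => fun _ => by
      simpa using ⟨[], by simp, by simp, by simp⟩
  | [p] => fun hl => by
      have hw' : ∀ x ∈ w.map (fun x => x⁻¹), x ∈ X ∨ x⁻¹ ∈ X := by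
        intro x hx
        simp only [List.mem_map] at hx
        obtain ⟨y, hy, rfl⟩ := hx
        rcases hw y hy with h | h
        · right; simpa using h
        · left; exact h
      -- first palindrome : u⁻¹ * p * v⁻¹ with v = w.reverse.prod
      have h1 : IsPalindrome X (w.prod⁻¹ * p * (w.map fun x => x⁻¹).prod) := by
        have := isPalindrome_sandwich X (hl p (by simp)) hw'
        rwa [← List.prod_inv_reverse] at this
      -- second palindrome : v * u
      have h2 : IsPalindrome X (w.reverse.prod * 1 * w.prod) :=
        isPalindrome_sandwich X (isPalindrome_one X) hw
      refine ⟨[w.prod⁻¹ * p * (w.map fun x => x⁻¹).prod,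
        w.reverse.prod * 1 * w.prod], by simp, ?_, ?_⟩
      · intro q hq
        simp only [List.mem_cons, List.not_mem_nil, or_false] at hq
        rcases hq with rfl | rfl
        · exact h1
        · exact h2
      · have hv : (w.map fun x => x⁻¹).prod = w.reverse.prod⁻¹ := by
          rw [List.prod_inv_reverse w.reverse, List.map_reverse, List.reverse_reverse]
        simp [hv, mul_assoc]
  | p :: q :: t => fun hl => by
      have hw' : ∀ x ∈ w.map (fun x => x⁻¹), x ∈ X ∨ x⁻¹ ∈ X := by
        intro x hx
        simp only [List.mem_map] at hx
        obtain ⟨y, hy, rfl⟩ := hx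
        rcases hw y hy with h | h
        · right; simpa using h
        · left; exact h
      -- a = u⁻¹ * p * v⁻¹
      have h1 : IsPalindrome X (w.prod⁻¹ * p * (w.map fun x => x⁻¹).prod) := by
        have := isPalindrome_sandwich X (hl p (by simp)) hw'
        rwa [← List.prod_inv_reverse] at this
      -- b = v * q * u
      have h2 : IsPalindrome X (w.reverse.prod * q * w.prod) :=
        isPalindrome_sandwich X (hl q (by simp)) hw
      obtain ⟨m, hm1, hm2, hm3⟩ := conj_prod_palindromes_s6 hw t
        (fun r hr => hl r (by simp [hr]))
      refine ⟨(w.prod⁻¹ * p * (w.map fun x => x⁻¹).prod) ::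
        (w.reverse.prod * q * w.prod) :: m, ?_, ?_, ?_⟩
      · have h2 : Even (t.length + 1 + 1) ↔ Even t.length := by
          simp [Nat.even_add_one]
        simp only [List.length_cons, hm1]
        by_cases he : Even t.length
        · rw [if_pos he, if_pos (h2.mpr he)]
        · rw [if_neg he, if_neg (fun h => he (h2.mp h))]
      · intro r hr
        simp only [List.mem_cons] at hr
        rcases hr with rfl | rfl | hr
        · exact h1
        · exact h2
        · exact hm2 r hr
      · have hv : (w.map fun x => x⁻¹).prod = w.reverse.prod⁻¹ := by
          rw [List.prod_inv_reverse w.reverse, List.map_reverse, List.reverse_reverse]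
        simp only [List.prod_cons, hm3, hv]
        group

end Aux

open scoped commutatorElement

theorem commutator_prod_palindromes_bound {G : Type*} [Group G] (X : Set G)
    (hX : Subgroup.closure X = ⊤) (u : G) (k : ℕ) (ps : List G)
    (hlen : ps.length = k) (hps : ∀ p ∈ ps, IsPalindrome X p) :
    ∃ j ≤ 2 * k + (if Even k then 0 else 1), IsProdOfPalindromes X j ⁅u, ps.prod⁆ := by
  -- get a word for u
  have hu : u ∈ Subgroup.closure X := hX ▸ Subgroup.mem_top u
  rw [← Subgroup.mem_toSubmonoid, Subgroup.closure_toSubmonoid] at hu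
  obtain ⟨w, hw, hwprod⟩ := Submonoid.exists_list_of_mem_closure hu
  have hw' : ∀ x ∈ w, x ∈ X ∨ x⁻¹ ∈ X := by
    intro x hx
    rcases hw x hx with h | h
    · exact Or.inl h
    · exact Or.inr (by simpa using h)
  -- a word for u⁻¹
  set w' : List G := (w.map fun x => x⁻¹).reverse with hw'def
  have hw'' : ∀ x ∈ w', x ∈ X ∨ x⁻¹ ∈ X := by
    intro x hx
    simp only [hw'def, List.mem_reverse, List.mem_map] at hx
    obtain ⟨y, hy, rfl⟩ := hx
    rcases hw' y hy with h | h
    · right; simpa using h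
    · left; exact h
  have hw'prod : w'.prod = u⁻¹ := by
    rw [hw'def, ← List.prod_inv_reverse, hwprod]
  -- the list of inverses of ps, reversed
  set l : List G := (ps.map fun x => x⁻¹).reverse with hl
  have hlprod : l.prod = ps.prod⁻¹ := (List.prod_inv_reverse ps).symm
  have hllen : l.length = k := by simp [hl, hlen]
  have hlpal : ∀ p ∈ l, IsPalindrome X p := by
    intro p hp
    simp only [hl, List.mem_reverse, List.mem_map] at hp
    obtain ⟨y, hy, rfl⟩ := hp
    exact isPalindrome_inv X (hps y hy)
  obtain ⟨m, hm1, hm2, hm3⟩ := conj_prod_palindromes_s6 X hw'' ps hps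
  refine ⟨2 * k + (if Even k then 0 else 1), le_refl _, m ++ l, ?_, ?_, ?_⟩
  · simp only [List.length_append, hm1, hllen, hlen]
    ring
  · intro p hp
    rcases List.mem_append.1 hp with h | h
    · exact hm2 p h
    · exact hlpal p h
  · rw [List.prod_append, hm3, hw'prod, hlprod, commutatorElement_def]
    group
end

section
/- Let G = ⟨A, x_1, ..., x_n⟩ be a group where A is an abelian normal subgroup of G. Then [A, G] = { [a_1, x_1][a_2, x_2]⋯[a_n, x_n] : a_i ∈ A }, i.e., every element of the subgroup [A, G] is a product of exactly n such commutators. -/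
open scoped commutatorElement

section Aux

variable {G : Type*} [Group G]

private lemma rhem_comm_mem (A : Subgroup G) [A.Normal] {a : G} (ha : a ∈ A) (g : G) :
    ⁅a, g⁆ ∈ A := by
  have h : ⁅a, g⁆ = a * (g * a⁻¹ * g⁻¹) := by group
  rw [h]
  exact mul_mem ha (Subgroup.Normal.conj_mem ‹A.Normal› _ (inv_mem ha) g)

private lemma rhem_comm_mul (A : Subgroup G) [A.Normal]
    (hA : ∀ a ∈ A, ∀ b ∈ A, a * b = b * a)
    {a b : G} (ha : a ∈ A) (hb : b ∈ A) (g : G) :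
    ⁅a * b, g⁆ = ⁅a, g⁆ * ⁅b, g⁆ := by
  have h1 : ⁅a * b, g⁆ = a * ⁅b, g⁆ * a⁻¹ * ⁅a, g⁆ := by group
  have h2 : a * ⁅b, g⁆ = ⁅b, g⁆ * a := hA a ha _ (rhem_comm_mem A hb g)
  have h3 : ⁅b, g⁆ * ⁅a, g⁆ = ⁅a, g⁆ * ⁅b, g⁆ :=
    hA _ (rhem_comm_mem A hb g) _ (rhem_comm_mem A ha g)
  rw [h1, h2, mul_assoc, mul_assoc, mul_inv_cancel_left]
  exact h3

private lemma rhem_prod_mem (A : Subgroup G) [A.Normal] :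
    ∀ (n : ℕ) (x a : Fin n → G), (∀ i, a i ∈ A) →
      (List.ofFn fun i => ⁅a i, x i⁆).prod ∈ A := by
  intro n x a ha
  refine Subgroup.list_prod_mem A ?_
  intro y hy
  rw [List.mem_ofFn] at hy
  obtain ⟨i, rfl⟩ := hy
  exact rhem_comm_mem A (ha i) (x i)

private lemma rhem_prod_mul (A : Subgroup G) [A.Normal]
    (hA : ∀ a ∈ A, ∀ b ∈ A, a * b = b * a) :
    ∀ (n : ℕ) (x a b : Fin n → G), (∀ i, a i ∈ A) → (∀ i, b i ∈ A) →
      (List.ofFn fun i => ⁅a i, x i⁆).prod * (List.ofFn fun i => ⁅b i, x i⁆).prod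
        = (List.ofFn fun i => ⁅a i * b i, x i⁆).prod := by
  intro n
  induction n with
  | zero => intro x a b _ _; simp
  | succ m ih =>
    intro x a b ha hb
    simp only [List.ofFn_succ, List.prod_cons]
    have hPa := rhem_prod_mem A m (fun i => x i.succ) (fun i => a i.succ)
      (fun i => ha i.succ)
    have hcomm : (List.ofFn fun i : Fin m => ⁅a i.succ, x i.succ⁆).prod * ⁅b 0, x 0⁆
        = ⁅b 0, x 0⁆ * (List.ofFn fun i : Fin m => ⁅a i.succ, x i.succ⁆).prod :=
      hA _ hPa _ (rhem_comm_mem A (hb 0) (x 0))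
    calc ⁅a 0, x 0⁆ * (List.ofFn fun i : Fin m => ⁅a i.succ, x i.succ⁆).prod *
          (⁅b 0, x 0⁆ * (List.ofFn fun i : Fin m => ⁅b i.succ, x i.succ⁆).prod)
        = ⁅a 0, x 0⁆ * ((List.ofFn fun i : Fin m => ⁅a i.succ, x i.succ⁆).prod *
            ⁅b 0, x 0⁆) * (List.ofFn fun i : Fin m => ⁅b i.succ, x i.succ⁆).prod := by
          group
      _ = ⁅a 0, x 0⁆ * ⁅b 0, x 0⁆ *
            ((List.ofFn fun i : Fin m => ⁅a i.succ, x i.succ⁆).prod *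
             (List.ofFn fun i : Fin m => ⁅b i.succ, x i.succ⁆).prod) := by
          rw [hcomm]; group
      _ = ⁅a 0 * b 0, x 0⁆ * (List.ofFn fun i : Fin m => ⁅a i.succ * b i.succ, x i.succ⁆).prod := by
          rw [← rhem_comm_mul A hA (ha 0) (hb 0) (x 0),
            ih (fun i => x i.succ) _ _ (fun i => ha i.succ) (fun i => hb i.succ)]

private lemma rhem_prod_one (n : ℕ) (x : Fin n → G) :
    (List.ofFn fun i => ⁅(1 : G), x i⁆).prod = 1 := by
  simp [commutatorElement_one_left]

private lemma rhem_single_prod :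
    ∀ (n : ℕ) (x : Fin n → G) (i : Fin n) (c : G),
      (List.ofFn fun j => ⁅(if j = i then c else 1), x j⁆).prod = ⁅c, x i⁆ := by
  intro n
  induction n with
  | zero => intro x i; exact i.elim0
  | succ m ih =>
    intro x i c
    induction i using Fin.cases with
    | zero =>
      simp only [List.ofFn_succ, List.prod_cons, if_pos rfl]
      have : ∀ j : Fin m, (if j.succ = (0 : Fin (m + 1)) then c else 1) = (1 : G) := by
        intro j; rw [if_neg (Fin.succ_ne_zero j)]
      simp only [this, rhem_prod_one, mul_one, if_true]
    | succ i' =>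
      simp only [List.ofFn_succ, List.prod_cons]
      rw [if_neg (Fin.succ_ne_zero i').symm, commutatorElement_one_left, one_mul]
      have : (fun j : Fin m => ⁅(if j.succ = i'.succ then c else 1), x j.succ⁆)
          = fun j : Fin m => ⁅(if j = i' then c else 1), (fun k : Fin m => x k.succ) j⁆ := by
        funext j
        simp [Fin.succ_inj]
      rw [this, ih (fun k => x k.succ) i' c]

end Aux

/-- Rhemtulla's lemma: if `A` is an abelian normal subgroup of `G` and
`G = ⟨A, x 0, ..., x (n-1)⟩`, then `[A, G]` is exactly the set of products
`[a 0, x 0][a 1, x 1]⋯[a (n-1), x (n-1)]` with `a i ∈ A`. -/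
theorem commutator_subgroup_eq_prod_commutators {G : Type*} [Group G]
    (A : Subgroup G) [A.Normal] (hA : ∀ a ∈ A, ∀ b ∈ A, a * b = b * a)
    (n : ℕ) (x : Fin n → G)
    (hgen : Subgroup.closure ((A : Set G) ∪ Set.range x) = ⊤) :
    ∀ g : G, g ∈ ⁅A, (⊤ : Subgroup G)⁆ ↔
      ∃ a : Fin n → G, (∀ i, a i ∈ A) ∧
        g = (List.ofFn fun i => ⁅a i, x i⁆).prod := by
  -- The set of products of commutators forms a subgroup S.
  set S : Subgroup G :=
    { carrier := {g | ∃ a : Fin n → G, (∀ i, a i ∈ A) ∧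
        g = (List.ofFn fun i => ⁅a i, x i⁆).prod}
      one_mem' := ⟨fun _ => 1, fun _ => one_mem A, (rhem_prod_one n x).symm⟩
      mul_mem' := by
        rintro g h ⟨a, ha, rfl⟩ ⟨b, hb, rfl⟩
        refine ⟨fun i => a i * b i, fun i => mul_mem (ha i) (hb i), ?_⟩
        rw [rhem_prod_mul A hA n x a b ha hb]
      inv_mem' := by
        rintro g ⟨a, ha, rfl⟩
        refine ⟨fun i => (a i)⁻¹, fun i => inv_mem (ha i), ?_⟩
        rw [eq_comm, eq_inv_iff_mul_eq_one,
          rhem_prod_mul A hA n x _ _ (fun i => inv_mem (ha i)) ha]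
        simp [commutatorElement_one_left, rhem_prod_one] } with hS
  -- Every element of S is in A.
  have hSA : ∀ g ∈ S, g ∈ A := by
    rintro g ⟨a, ha, rfl⟩
    exact rhem_prod_mem A n x a ha
  -- The set T of g such that ⁅a, g⁆ ∈ S for all a ∈ A is a subgroup.
  set T : Subgroup G :=
    { carrier := {g | ∀ a ∈ A, ⁅a, g⁆ ∈ S}
      one_mem' := by
        intro a _
        rw [commutatorElement_one_right]
        exact S.one_mem
      mul_mem' := by
        intro g h hg hh a haA
        have key : ⁅a, g * h⁆ = ⁅a, g⁆ * (g * ⁅a, h⁆ * g⁻¹) := by group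
        have hc : ⁅a, h⁆ ∈ S := hh a haA
        have hcA : ⁅a, h⁆ ∈ A := hSA _ hc
        have hconj : g * ⁅a, h⁆ * g⁻¹ = ⁅a, h⁆ * ⁅⁅a, h⁆⁻¹, g⁆ := by group
        rw [key, hconj]
        exact S.mul_mem (hg a haA) (S.mul_mem hc (hg _ (inv_mem hcA)))
      inv_mem' := by
        intro g hg a haA
        have key : ⁅a, g⁻¹⁆ = ⁅g⁻¹ * a * g, g⁆⁻¹ := by group
        rw [key]
        exact S.inv_mem (hg _ (Subgroup.Normal.conj_mem' ‹A.Normal› a haA g)) } with hT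
  -- T contains the generators, hence T = ⊤.
  have hTtop : ∀ g : G, ∀ a ∈ A, ⁅a, g⁆ ∈ S := by
    have : Subgroup.closure ((A : Set G) ∪ Set.range x) ≤ T := by
      rw [Subgroup.closure_le]
      rintro g (hg | ⟨i, rfl⟩)
      · intro a haA
        have : ⁅a, g⁆ = 1 := by
          rw [commutatorElement_eq_one_iff_mul_comm]
          exact hA a haA g hg
        rw [this]; exact S.one_mem
      · intro a haA
        exact ⟨fun j => if j = i then a else 1,
          fun j => by dsimp only; split <;> simp [haA, one_mem],
          (rhem_single_prod n x i a).symm⟩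
    rw [hgen] at this
    intro g a haA
    exact this (Subgroup.mem_top g) a haA
  intro g
  constructor
  · intro hg
    have hle : ⁅A, (⊤ : Subgroup G)⁆ ≤ S := by
      rw [Subgroup.commutator_le]
      intro a haA g' _
      exact hTtop g' a haA
    exact hle hg
  · rintro ⟨a, ha, rfl⟩
    refine Subgroup.list_prod_mem _ ?_
    intro y hy
    rw [List.mem_ofFn] at hy
    obtain ⟨i, rfl⟩ := hy
    exact Subgroup.commutator_mem_commutator (ha i) (Subgroup.mem_top (x i))
end

section
/- In G = Z ≀ Z, every element of the commutator subgroup G' is a single commutator; more precisely, for every c ∈ C with Σ_i n_i = 0 there exists f ∈ C such that [f, b] = c, where b generates the acting copy of Z. -/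
lemma emd_one (x : ℤ →₀ ℤ) : Finsupp.equivMapDomain (1 : Equiv.Perm ℤ) x = x := by
  ext i; simp [Finsupp.equivMapDomain_apply]; rfl

lemma emd_mul (e f : Equiv.Perm ℤ) (x : ℤ →₀ ℤ) :
    Finsupp.equivMapDomain (e * f) x = Finsupp.equivMapDomain e (Finsupp.equivMapDomain f x) := by
  ext i; simp [Finsupp.equivMapDomain_apply]; rfl

/-- The shift automorphism of the base group of `ℤ ≀ ℤ`. -/
noncomputable def shiftAut (k : ℤ) : Multiplicative (ℤ →₀ ℤ) ≃* Multiplicative (ℤ →₀ ℤ) :=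
  AddEquiv.toMultiplicative (Finsupp.domCongr (Equiv.addRight k))

/-- The action of the top group `ℤ` on the base group `⨁_{i ∈ ℤ} ℤ` by shifting indices. -/
noncomputable def wrφ : Multiplicative ℤ →* MulAut (Multiplicative (ℤ →₀ ℤ)) where
  toFun k := shiftAut k.toAdd
  map_one' := by
    ext f
    simp [shiftAut, Finsupp.domCongr_apply, emd_one]
  map_mul' k l := by
    ext f
    simp [shiftAut, Finsupp.domCongr_apply, MulAut.mul_apply, emd_mul]
    ring_nf

/-- The restricted wreath product `ℤ ≀ ℤ`, realized as the semidirect product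
of the base group `⨁_{i ∈ ℤ} ℤ` by `ℤ` acting by shifts. -/
noncomputable abbrev ZwrZ : Type :=
  SemidirectProduct (Multiplicative (ℤ →₀ ℤ)) (Multiplicative ℤ) wrφ

/-- The standard generator `a` of `ℤ ≀ ℤ` (generator of the 0-th base copy of `ℤ`). -/
noncomputable def aGen : ZwrZ := SemidirectProduct.inl (Multiplicative.ofAdd (Finsupp.single 0 1))

/-- The standard generator `b` of `ℤ ≀ ℤ` (generator of the acting copy of `ℤ`). -/
noncomputable def bGen : ZwrZ := SemidirectProduct.inr (Multiplicative.ofAdd 1)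

/-- The embedding of a base-group element `c = (n_i)_{i ∈ ℤ}` into `ℤ ≀ ℤ`. -/
noncomputable def base (c : ℤ →₀ ℤ) : ZwrZ := SemidirectProduct.inl (Multiplicative.ofAdd c)

open scoped commutatorElement

lemma comm_base_bGen (f : ℤ →₀ ℤ) :
    ⁅base f, bGen⁆ = base (f - Finsupp.equivMapDomain (Equiv.addRight (1:ℤ)) f) := by
  rw [commutatorElement_def]
  ext
  · simp only [base, bGen, SemidirectProduct.mul_left, SemidirectProduct.mul_right,
      SemidirectProduct.inv_left, SemidirectProduct.inv_right, SemidirectProduct.left_inl,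
      SemidirectProduct.right_inl, SemidirectProduct.left_inr, SemidirectProduct.right_inr]
    simp [commutatorElement_def, base, bGen, SemidirectProduct.mul_left,
      SemidirectProduct.inv_left, SemidirectProduct.inv_right, div_eq_mul_inv, wrφ, shiftAut,
      Finsupp.domCongr_apply, emd_one]
  · simp [commutatorElement_def, base, bGen, SemidirectProduct.mul_right,
      SemidirectProduct.inv_right, div_eq_mul_inv]

/-- Every element of the commutator subgroup of `ℤ ≀ ℤ` is a single commutator `[f, b]`
with `f` in the base group. -/
theorem commutator_ZwrZ_is_commutator :
    ∀ c : ℤ →₀ ℤ, (c.sum fun _ n => n) = 0 → ∃ f : ℤ →₀ ℤ, ⁅base f, bGen⁆ = base c := by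
  intro c hc
  rcases eq_or_ne c.support ∅ with h0 | h0
  · refine ⟨0, ?_⟩
    rw [comm_base_bGen]
    congr 1
    rw [Finsupp.support_eq_empty.mp h0]
    ext i
    simp [Finsupp.equivMapDomain_apply]
  · have hne : c.support.Nonempty := Finset.nonempty_of_ne_empty h0
    set m := c.support.min' hne with hm
    set M := c.support.max' hne with hM
    set g : ℤ → ℤ := fun i => ∑ j ∈ c.support, if j ≤ i then c j else 0 with hg
    have hsupp : ∀ i : ℤ, g i ≠ 0 → i ∈ Finset.Icc m M := by
      intro i hi
      by_contra hmem
      rw [Finset.mem_Icc] at hmem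
      push_neg at hmem
      rcases le_or_gt m i with hmi | hmi
      · -- then M < i, so all j ≤ i, sum is total sum = 0
        have hMi := hmem hmi
        apply hi
        have : g i = ∑ j ∈ c.support, c j := by
          apply Finset.sum_congr rfl
          intro j hj
          have : j ≤ M := c.support.le_max' j hj
          rw [if_pos (by omega)]
        rw [this]; exact hc
      · -- i < m, all terms are 0
        apply hi
        apply Finset.sum_eq_zero
        intro j hj
        have : m ≤ j := c.support.min'_le j hj
        rw [if_neg (by omega)]
    set f : ℤ →₀ ℤ := Finsupp.onFinset (Finset.Icc m M) g hsupp with hf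
    refine ⟨f, ?_⟩
    rw [comm_base_bGen]
    congr 1
    ext i
    have hfe : ∀ i : ℤ, f i = g i := fun _ => rfl
    rw [Finsupp.sub_apply, Finsupp.equivMapDomain_apply, hfe, hfe]
    have : (Equiv.addRight (1:ℤ)).symm i = i - 1 := rfl
    rw [this, hg]
    simp only
    rw [← Finset.sum_sub_distrib]
    have : ∀ j ∈ c.support,
        ((if j ≤ i then c j else 0) - (if j ≤ i - 1 then c j else 0))
          = if j = i then c j else 0 := by
      intro j _
      rcases eq_or_ne j i with rfl | hji
      · simp
      · rw [if_neg hji]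
        rcases le_or_gt j (i-1) with h | h
        · rw [if_pos (by omega), if_pos h]; ring
        · rw [if_neg (by omega), if_neg (by omega)]; ring
    rw [Finset.sum_congr rfl this, Finset.sum_ite_eq' c.support i c]
    split
    · rfl
    · next h => exact (Finsupp.notMem_support_iff.mp h).symm
end

section
/- The palindromic width of the metabelian Baumslag–Solitar group BS(1,n) = ⟨a, t | t^{-1}at = a^n⟩ with respect to the generating set {a, t} is at most 2: every element is a product of two palindromes. -/
/-- The relator `t⁻¹ a t a⁻ⁿ` of the Baumslag–Solitar group `BS(1,n)`. -/
def BSrels (n : ℤ) : Set (FreeGroup (Fin 2)) :=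
  {(FreeGroup.of 1)⁻¹ * FreeGroup.of 0 * FreeGroup.of 1 * (FreeGroup.of 0 ^ n)⁻¹}

/-- The Baumslag–Solitar group `BS(1,n) = ⟨a, t | t⁻¹ a t = aⁿ⟩`. -/
def BS (n : ℤ) : Type := PresentedGroup (BSrels n)

instance (n : ℤ) : Group (BS n) := by unfold BS; infer_instance

/-- The generator `a` of `BS(1,n)`. -/
def BSa (n : ℤ) : BS n := PresentedGroup.of 0

/-- The generator `t` of `BS(1,n)`. -/
def BSt (n : ℤ) : BS n := PresentedGroup.of 1

lemma BS_rel (n : ℤ) : (BSt n)⁻¹ * BSa n * BSt n = (BSa n) ^ n := by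
  have h : PresentedGroup.mk (BSrels n)
      ((FreeGroup.of 1)⁻¹ * FreeGroup.of 0 * FreeGroup.of 1 * (FreeGroup.of 0 ^ n)⁻¹) = 1 := by
    refine (QuotientGroup.eq_one_iff _).mpr ?_
    exact Subgroup.subset_normalClosure rfl
  rw [map_mul, map_mul, map_mul, map_inv, map_inv, map_zpow] at h
  exact mul_inv_eq_one.mp h

lemma BS_conj1 (n l : ℤ) : (BSt n)⁻¹ * (BSa n) ^ l * BSt n = (BSa n) ^ (n * l) := by
  have h := conj_zpow (a := (BSt n)⁻¹) (b := BSa n) (i := l)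
  rw [inv_inv] at h
  rw [← h, BS_rel, ← zpow_mul]

lemma BS_conj (n : ℤ) (j : ℕ) (l : ℤ) :
    ((BSt n) ^ j)⁻¹ * (BSa n) ^ l * (BSt n) ^ j = (BSa n) ^ (l * n ^ j) := by
  induction j generalizing l with
  | zero => simp
  | succ j ih =>
    rw [pow_succ, mul_inv_rev]
    calc (BSt n)⁻¹ * ((BSt n) ^ j)⁻¹ * (BSa n) ^ l * ((BSt n) ^ j * BSt n)
        = (BSt n)⁻¹ * (((BSt n) ^ j)⁻¹ * (BSa n) ^ l * (BSt n) ^ j) * BSt n := by group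
      _ = (BSt n)⁻¹ * (BSa n) ^ (l * n ^ j) * BSt n := by rw [ih]
      _ = (BSa n) ^ (n * (l * n ^ j)) := BS_conj1 n _
      _ = (BSa n) ^ (l * n ^ (j + 1)) := by rw [show n * (l * n ^ j) = l * n ^ (j + 1) by ring]

lemma BS_push (n : ℤ) (j : ℕ) (l : ℤ) :
    ((BSt n) ^ j)⁻¹ * (BSa n) ^ l = (BSa n) ^ (l * n ^ j) * ((BSt n) ^ j)⁻¹ := by
  rw [← BS_conj n j l]; group

lemma BS_push' (n : ℤ) (j : ℕ) (l : ℤ) :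
    (BSa n) ^ l * (BSt n) ^ j = (BSt n) ^ j * (BSa n) ^ (l * n ^ j) := by
  rw [← BS_conj n j l]; group

lemma BS_normal_form (n : ℤ) (g : BS n) :
    ∃ (k m : ℕ) (l : ℤ), g = (BSt n) ^ k * (BSa n) ^ l * ((BSt n) ^ m)⁻¹ := by
  let S : Subgroup (BS n) :=
    { carrier := {g | ∃ (k m : ℕ) (l : ℤ), g = (BSt n) ^ k * (BSa n) ^ l * ((BSt n) ^ m)⁻¹}
      one_mem' := ⟨0, 0, 0, by simp⟩
      inv_mem' := by
        rintro x ⟨k, m, l, rfl⟩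
        exact ⟨m, k, -l, by group⟩
      mul_mem' := by
        rintro x y ⟨k1, m1, l1, rfl⟩ ⟨k2, m2, l2, rfl⟩
        rcases le_or_gt k2 m1 with h | h
        · set j := m1 - k2 with hj
          have hm1 : m1 = k2 + j := by omega
          refine ⟨k1, j + m2, l1 + l2 * n ^ j, ?_⟩
          have hc : ((BSt n) ^ m1)⁻¹ * (BSt n) ^ k2 = ((BSt n) ^ j)⁻¹ := by
            rw [hm1, pow_add, mul_inv_rev, mul_assoc, inv_mul_cancel, mul_one]
          calc (BSt n) ^ k1 * (BSa n) ^ l1 * ((BSt n) ^ m1)⁻¹ *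
                ((BSt n) ^ k2 * (BSa n) ^ l2 * ((BSt n) ^ m2)⁻¹)
              = (BSt n) ^ k1 * (BSa n) ^ l1 * (((BSt n) ^ m1)⁻¹ * (BSt n) ^ k2) *
                (BSa n) ^ l2 * ((BSt n) ^ m2)⁻¹ := by group
            _ = (BSt n) ^ k1 * (BSa n) ^ l1 * (((BSt n) ^ j)⁻¹ * (BSa n) ^ l2) *
                ((BSt n) ^ m2)⁻¹ := by rw [hc]; group
            _ = (BSt n) ^ k1 * (BSa n) ^ l1 * ((BSa n) ^ (l2 * n ^ j) * ((BSt n) ^ j)⁻¹) *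
                ((BSt n) ^ m2)⁻¹ := by rw [BS_push]
            _ = (BSt n) ^ k1 * (BSa n) ^ (l1 + l2 * n ^ j) * ((BSt n) ^ (j + m2))⁻¹ := by
                rw [zpow_add, pow_add]; group
        · set j := k2 - m1 with hj
          have hk2 : k2 = m1 + j := by omega
          refine ⟨k1 + j, m2, l1 * n ^ j + l2, ?_⟩
          have hc : ((BSt n) ^ m1)⁻¹ * (BSt n) ^ k2 = (BSt n) ^ j := by
            rw [hk2, pow_add, ← mul_assoc, inv_mul_cancel, one_mul]
          calc (BSt n) ^ k1 * (BSa n) ^ l1 * ((BSt n) ^ m1)⁻¹ *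
                ((BSt n) ^ k2 * (BSa n) ^ l2 * ((BSt n) ^ m2)⁻¹)
              = (BSt n) ^ k1 * ((BSa n) ^ l1 * (((BSt n) ^ m1)⁻¹ * (BSt n) ^ k2)) *
                (BSa n) ^ l2 * ((BSt n) ^ m2)⁻¹ := by group
            _ = (BSt n) ^ k1 * ((BSa n) ^ l1 * (BSt n) ^ j) *
                (BSa n) ^ l2 * ((BSt n) ^ m2)⁻¹ := by rw [hc]
            _ = (BSt n) ^ k1 * ((BSt n) ^ j * (BSa n) ^ (l1 * n ^ j)) *
                (BSa n) ^ l2 * ((BSt n) ^ m2)⁻¹ := by rw [BS_push']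
            _ = (BSt n) ^ (k1 + j) * (BSa n) ^ (l1 * n ^ j + l2) * ((BSt n) ^ m2)⁻¹ := by
                rw [zpow_add, pow_add]; group }
  have hg : g ∈ S := by
    refine PresentedGroup.generated_by (BSrels n) S ?_ g
    intro i
    fin_cases i
    · exact ⟨0, 0, 1, by simp only [pow_zero, one_mul, inv_one, mul_one, zpow_one]; rfl⟩
    · exact ⟨1, 0, 0, by simp only [pow_zero, pow_one, zpow_zero, inv_one, mul_one]; rfl⟩
  exact hg

lemma pal_repl {G : Type*} [Group G] (X : Set G) (g : G) (hg : g ∈ X ∨ g⁻¹ ∈ X) (k : ℕ) :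
    IsPalindrome X (g ^ k) :=
  ⟨List.replicate k g,
    fun x hx => by rw [List.eq_of_mem_replicate hx]; exact hg,
    List.reverse_replicate, List.prod_replicate k g⟩

lemma pal_sandwich_s15 {G : Type*} [Group G] (X : Set G) (s g : G)
    (hs : s ∈ X ∨ s⁻¹ ∈ X) (hg : g ∈ X ∨ g⁻¹ ∈ X) (k j : ℕ) :
    IsPalindrome X (s ^ k * g ^ j * s ^ k) := by
  refine ⟨List.replicate k s ++ List.replicate j g ++ List.replicate k s, ?_, ?_, ?_⟩
  · intro x hx
    simp only [List.mem_append, List.mem_replicate] at hx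
    rcases hx with (⟨-, rfl⟩ | ⟨-, rfl⟩) | ⟨-, rfl⟩ <;> assumption
  · simp [List.reverse_append]
  · simp [List.prod_replicate, mul_assoc]

/-- Every element of `BS(1,n)` is a product of two palindromes in the generators
`a`, `t`. -/
theorem BS_pw_le_two (n : ℤ) (hn : n ≠ 0) (g : BS n) :
    ∃ p q : BS n, IsPalindrome {BSa n, BSt n} p ∧ IsPalindrome {BSa n, BSt n} q ∧
      g = p * q := by
  obtain ⟨k, m, l, rfl⟩ := BS_normal_form n g
  set a := BSa n
  set t := BSt n
  have ha : a ∈ ({a, t} : Set (BS n)) ∨ a⁻¹ ∈ ({a, t} : Set (BS n)) := Or.inl (by simp)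
  have ha' : a⁻¹ ∈ ({a, t} : Set (BS n)) ∨ a⁻¹⁻¹ ∈ ({a, t} : Set (BS n)) := by
    right; simp
  have ht : t ∈ ({a, t} : Set (BS n)) ∨ t⁻¹ ∈ ({a, t} : Set (BS n)) := Or.inl (by simp)
  have ht' : t⁻¹ ∈ ({a, t} : Set (BS n)) ∨ t⁻¹⁻¹ ∈ ({a, t} : Set (BS n)) := by
    right; simp
  refine ⟨t ^ k * a ^ l * t ^ k, (t⁻¹) ^ (k + m), ?_, ?_, ?_⟩
  · rcases le_or_gt 0 l with hl | hl
    · have : a ^ l = a ^ l.toNat := by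
        rw [← zpow_natCast, Int.toNat_of_nonneg hl]
      rw [this]
      exact pal_sandwich_s15 _ t a ht ha k l.toNat
    · have : a ^ l = (a⁻¹) ^ (-l).toNat := by
        rw [inv_pow, ← zpow_natCast, Int.toNat_of_nonneg (by omega : (0:ℤ) ≤ -l), ← zpow_neg,
          neg_neg]
      rw [this]
      exact pal_sandwich_s15 _ t a⁻¹ ht ha' k (-l).toNat
  · exact pal_repl _ t⁻¹ ht' (k + m)
  · rw [inv_pow, pow_add]
    group
end

section
/- In G = Z ≀ Z with generators a (base) and b (top), every element is a product of at most 3 palindromes with respect to {a, b}. -/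
/-! ### Auxiliary definitions and lemmas -/

noncomputable def bpow (k : ℤ) : ZwrZ := SemidirectProduct.inr (Multiplicative.ofAdd k)

lemma base_mul (x y : ℤ →₀ ℤ) : base x * base y = base (x + y) := by
  simp [base, ← map_mul, ← ofAdd_add]

lemma base_zero : base 0 = 1 := by simp [base]

lemma bpow_mul (j k : ℤ) : bpow j * bpow k = bpow (j + k) := by
  simp [bpow, ← map_mul, ← ofAdd_add]

lemma bpow_zero : bpow 0 = 1 := by simp [bpow]

lemma wrφ_apply (m : ℤ) (x : ℤ →₀ ℤ) :
    wrφ (Multiplicative.ofAdd m) (Multiplicative.ofAdd x)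
      = Multiplicative.ofAdd (Finsupp.equivMapDomain (Equiv.addRight m) x) := rfl

lemma bpow_mul_base (m : ℤ) (x : ℤ →₀ ℤ) :
    bpow m * base x = base (Finsupp.equivMapDomain (Equiv.addRight m) x) * bpow m := by
  ext
  · simp [bpow, base, wrφ_apply]
  · simp [bpow, base]

lemma bGen_zpow (k : ℤ) : bGen ^ k = bpow k := by
  unfold bGen bpow
  rw [← map_zpow]
  congr 1
  rw [← ofAdd_zsmul]
  simp

lemma bGen_eq : bGen = bpow 1 := rfl

lemma aGen_zpow (t : ℤ) : aGen ^ t = base (Finsupp.single 0 t) := by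
  unfold aGen base
  rw [← map_zpow]
  congr 1
  rw [← ofAdd_zsmul, Finsupp.smul_single, smul_eq_mul, mul_one]

def zpowWord {G : Type*} [Group G] (x : G) (n : ℤ) : List G :=
  if 0 ≤ n then List.replicate n.toNat x else List.replicate (-n).toNat x⁻¹

lemma zpowWord_prod {G : Type*} [Group G] (x : G) (n : ℤ) : (zpowWord x n).prod = x ^ n := by
  unfold zpowWord
  split
  · rw [List.prod_replicate, ← zpow_natCast, Int.toNat_of_nonneg ‹_›]
  · rw [List.prod_replicate, ← zpow_natCast, Int.toNat_of_nonneg (by omega), inv_zpow, ← zpow_neg,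
      neg_neg]

lemma zpowWord_reverse {G : Type*} [Group G] (x : G) (n : ℤ) :
    (zpowWord x n).reverse = zpowWord x n := by
  unfold zpowWord; split <;> exact List.reverse_replicate

lemma zpowWord_mem {G : Type*} [Group G] (x : G) (n : ℤ) :
    ∀ y ∈ zpowWord x n, y = x ∨ y = x⁻¹ := by
  intro y hy
  unfold zpowWord at hy
  split at hy
  · exact Or.inl (List.eq_of_mem_replicate hy)
  · exact Or.inr (List.eq_of_mem_replicate hy)

lemma zpowWord_mem' {G : Type*} [Group G] {X : Set G} {x : G} (hx : x ∈ X) (n : ℤ) :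
    ∀ y ∈ zpowWord x n, y ∈ X ∨ y⁻¹ ∈ X := by
  intro y hy
  rcases zpowWord_mem x n y hy with h | h
  · exact Or.inl (h ▸ hx)
  · exact Or.inr (by rw [h, inv_inv]; exact hx)

lemma sandwich {G : Type*} [Group G] {X : Set G} (w : List G)
    (hw : ∀ x ∈ w, x ∈ X ∨ x⁻¹ ∈ X) {p : G} (hp : IsPalindrome X p) :
    IsPalindrome X (w.prod * p * w.reverse.prod) := by
  obtain ⟨wp, hmem, hrev, hprod⟩ := hp
  refine ⟨w ++ wp ++ w.reverse, ?_, ?_, ?_⟩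
  · intro x hx
    simp only [List.mem_append, List.mem_reverse] at hx
    rcases hx with (hx | hx) | hx
    · exact hw x hx
    · exact hmem x hx
    · exact hw x hx
  · simp [List.reverse_append, hrev, List.append_assoc]
  · simp [List.prod_append, hprod, mul_assoc]

lemma bpow_palindrome (k : ℤ) : IsPalindrome {aGen, bGen} (bpow k) := by
  refine ⟨zpowWord bGen k, zpowWord_mem' (by simp) k, zpowWord_reverse _ _, ?_⟩
  rw [zpowWord_prod, bGen_zpow]

noncomputable def conjWord (m t : ℤ) : List ZwrZ :=
  zpowWord bGen m ++ (zpowWord aGen t ++ zpowWord bGen (-m))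

lemma conjWord_mem (m t : ℤ) :
    ∀ x ∈ conjWord m t, x ∈ ({aGen, bGen} : Set ZwrZ) ∨ x⁻¹ ∈ ({aGen, bGen} : Set ZwrZ) := by
  intro x hx
  simp only [conjWord, List.mem_append] at hx
  rcases hx with hx | hx | hx
  · exact zpowWord_mem' (by simp) m x hx
  · exact zpowWord_mem' (by simp) t x hx
  · exact zpowWord_mem' (by simp) (-m) x hx

lemma emd_single (m a t : ℤ) :
    Finsupp.equivMapDomain (Equiv.addRight m) (Finsupp.single a t) = Finsupp.single (a + m) t := by
  rw [Finsupp.equivMapDomain_single]; rfl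

lemma conjWord_prod (m t : ℤ) : (conjWord m t).prod = base (Finsupp.single m t) := by
  simp only [conjWord, List.prod_append, zpowWord_prod, bGen_zpow, aGen_zpow]
  rw [← mul_assoc, bpow_mul_base, emd_single, mul_assoc, bpow_mul,
    show m + -m = 0 from by ring, bpow_zero, mul_one, zero_add]

lemma conjWord_reverse_prod (m t : ℤ) :
    (conjWord m t).reverse.prod = base (Finsupp.single (-m) t) := by
  have h : (conjWord m t).reverse = conjWord (-m) t := by
    simp [conjWord, List.reverse_append, zpowWord_reverse, List.append_assoc]
  rw [h, conjWord_prod]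

lemma key : ∀ (N : ℕ) (k : ℤ) (c : ℤ →₀ ℤ), c.support.card ≤ N → (∀ i, c i = c (k - i)) →
    IsPalindrome {aGen, bGen} (base c * bpow k) := by
  intro N
  induction N with
  | zero =>
    intro k c hcard _
    have hc : c = 0 :=
      Finsupp.support_eq_empty.mp (Finset.card_eq_zero.mp (Nat.le_zero.mp hcard))
    subst hc
    rw [base_zero, one_mul]
    exact bpow_palindrome k
  | succ N ih =>
    intro k c hcard hsym
    by_cases hex : ∃ n, c n ≠ 0 ∧ 2 * n ≠ k
    · obtain ⟨m, hm, hmk⟩ := hex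
      set t := c m with ht
      set c' : ℤ →₀ ℤ := c - Finsupp.single m t - Finsupp.single (k - m) t with hc'
      have happ : ∀ i, c' i = c i - (if m = i then t else 0) - (if k - m = i then t else 0) := by
        intro i
        rw [hc']
        simp only [Finsupp.sub_apply, Finsupp.single_apply]
      have hckm : c (k - m) = t := by
        rw [ht, hsym m]
      have hsym' : ∀ i, c' i = c' (k - i) := by
        intro i
        rw [happ i, happ (k - i), ← hsym i]
        split_ifs <;> omega
      have hsupp : c'.support ⊆ c.support.erase m := by
        intro i hi
        rw [Finsupp.mem_support_iff] at hi
        rw [Finset.mem_erase, Finsupp.mem_support_iff]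
        by_cases him : i = m
        · exfalso
          apply hi
          rw [happ, him]
          have h1 : ¬ (k - m = m) := by omega
          simp [h1, ht]
        · by_cases hikm : i = k - m
          · exfalso
            apply hi
            rw [happ, hikm]
            have h1 : ¬ (m = k - m) := by omega
            simp [h1, hckm]
          · refine ⟨him, ?_⟩
            intro h0
            apply hi
            rw [happ]
            have h1 : ¬ (m = i) := fun h => him h.symm
            have h2 : ¬ (k - m = i) := fun h => hikm h.symm
            simp [h0, h1, h2]
      have hcard' : c'.support.card ≤ N := by
        have h1 := Finset.card_le_card hsupp
        have h2 : (c.support.erase m).card = c.support.card - 1 :=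
          Finset.card_erase_of_mem (Finsupp.mem_support_iff.mpr hm)
        have h3 : 1 ≤ c.support.card :=
          Finset.card_pos.mpr ⟨m, Finsupp.mem_support_iff.mpr hm⟩
        omega
      have hp' := ih k c' hcard' hsym'
      have hfs : Finsupp.single m t + c' + Finsupp.single (k - m) t = c := by
        rw [hc']
        abel
      have hrw : base c * bpow k =
          (conjWord m t).prod * (base c' * bpow k) * (conjWord m t).reverse.prod := by
        rw [conjWord_prod, conjWord_reverse_prod, mul_assoc, mul_assoc, bpow_mul_base,
          emd_single, show -m + k = k - m from by ring, ← mul_assoc, ← mul_assoc,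
          base_mul, base_mul, hfs]
      rw [hrw]
      exact sandwich _ (conjWord_mem m t) hp'
    · push_neg at hex
      by_cases hc : c = 0
      · subst hc
        rw [base_zero, one_mul]
        exact bpow_palindrome k
      · obtain ⟨j, hj⟩ : ∃ j, c j ≠ 0 := by
          by_contra h
          push_neg at h
          exact hc (Finsupp.ext h)
        have hk : 2 * j = k := hex j hj
        have hcs : c = Finsupp.single j (c j) := by
          ext i
          by_cases hij : i = j
          · subst hij
            exact Finsupp.single_eq_same.symm
          · have h0 : c i = 0 := by
              by_contra h
              have := hex i h
              omega
            have h1 : ¬ (j = i) := fun h => hij h.symm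
            rw [h0, Finsupp.single_apply, if_neg h1]
        refine ⟨zpowWord bGen j ++ (zpowWord aGen (c j) ++ zpowWord bGen j), ?_, ?_, ?_⟩
        · intro x hx
          simp only [List.mem_append] at hx
          rcases hx with hx | hx | hx
          · exact zpowWord_mem' (by simp) j x hx
          · exact zpowWord_mem' (by simp) (c j) x hx
          · exact zpowWord_mem' (by simp) j x hx
        · simp [List.reverse_append, zpowWord_reverse, List.append_assoc]
        · simp only [List.prod_append, zpowWord_prod, bGen_zpow, aGen_zpow]
          rw [← mul_assoc, bpow_mul_base, emd_single, zero_add, mul_assoc, bpow_mul,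
            show j + j = 2 * j from by ring, hk, ← hcs]

lemma singleDecomp : ∀ (n : ℕ) (m t : ℤ), m.natAbs ≤ n →
    ∃ u v : ℤ →₀ ℤ, Finsupp.single m t = u + v ∧ (∀ i, u i = u (-i)) ∧ (∀ i, v i = v (1 - i)) := by
  intro n
  induction n with
  | zero =>
    intro m t hm
    have : m = 0 := by omega
    subst this
    exact ⟨Finsupp.single 0 t, 0, by simp, fun i => by
      simp only [Finsupp.single_apply]; split_ifs <;> omega, fun i => by simp⟩
  | succ n ih =>
    intro m t hm
    rcases lt_trichotomy m 0 with hneg | rfl | hpos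
    · obtain ⟨u, v, he, hu, hv⟩ := ih (1 + m) t (by omega)
      refine ⟨(Finsupp.single m t + Finsupp.single (-m) t) + u,
        (-(Finsupp.single (-m) t + Finsupp.single (1 + m) t)) + v, ?_, ?_, ?_⟩
      · rw [he]; abel
      · intro i
        simp only [Finsupp.add_apply, hu i, Finsupp.single_apply]
        split_ifs <;> omega
      · intro i
        simp only [Finsupp.add_apply, Finsupp.neg_apply, hv i, Finsupp.single_apply]
        split_ifs <;> omega
    · exact ⟨Finsupp.single 0 t, 0, by simp, fun i => by
        simp only [Finsupp.single_apply]; split_ifs <;> omega, fun i => by simp⟩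
    · obtain ⟨u, v, he, hu, hv⟩ := ih (1 - m) t (by omega)
      refine ⟨(-u), (Finsupp.single m t + Finsupp.single (1 - m) t) + (-v), ?_, ?_, ?_⟩
      · have h2 : (Finsupp.single (1 - m) t : ℤ →₀ ℤ) = u + v := he
        rw [h2]; abel
      · intro i; simp only [Finsupp.neg_apply, hu i]
      · intro i
        simp only [Finsupp.add_apply, Finsupp.neg_apply, hv i, Finsupp.single_apply]
        split_ifs <;> omega

lemma decomp (c : ℤ →₀ ℤ) :
    ∃ u v : ℤ →₀ ℤ, c = u + v ∧ (∀ i, u i = u (-i)) ∧ (∀ i, v i = v (1 - i)) := by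
  induction c using Finsupp.induction with
  | zero => exact ⟨0, 0, by simp, by simp, by simp⟩
  | single_add a b f ha hb ih =>
    obtain ⟨u, v, h1, h2, h3⟩ := ih
    obtain ⟨u', v', g1, g2, g3⟩ := singleDecomp a.natAbs a b le_rfl
    refine ⟨u' + u, v' + v, ?_, ?_, ?_⟩
    · rw [h1, g1]; abel
    · intro i; simp only [Finsupp.add_apply, h2 i, g2 i]
    · intro i; simp only [Finsupp.add_apply, h3 i, g3 i]

/-- Every element of `ℤ ≀ ℤ` is a product of at most 3 palindromes in the
generators `a`, `b`. -/
theorem ZwrZ_pw_le_three :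
    ∀ g : ZwrZ, ∃ l : List ZwrZ, l.length ≤ 3 ∧
      (∀ p ∈ l, IsPalindrome {aGen, bGen} p) ∧ l.prod = g := by
  intro g
  set c : ℤ →₀ ℤ := Multiplicative.toAdd g.left with hcdef
  set k : ℤ := Multiplicative.toAdd g.right with hkdef
  have hg : base c * bpow k = g := by
    simp only [base, bpow, hcdef, hkdef, ofAdd_toAdd]
    exact SemidirectProduct.inl_left_mul_inr_right g
  obtain ⟨u, v, huv, hu, hv⟩ := decomp c
  refine ⟨[base u, base v * bGen, bpow (k - 1)], by simp, ?_, ?_⟩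
  · intro p hp
    simp only [List.mem_cons, List.not_mem_nil, or_false] at hp
    rcases hp with rfl | rfl | rfl
    · have h := key u.support.card 0 u le_rfl (fun i => by rw [zero_sub]; exact hu i)
      rwa [bpow_zero, mul_one] at h
    · rw [bGen_eq]
      exact key v.support.card 1 v le_rfl hv
    · exact bpow_palindrome (k - 1)
  · simp only [List.prod_cons, List.prod_nil, mul_one]
    rw [bGen_eq, mul_assoc (base v), bpow_mul, show (1 : ℤ) + (k - 1) = k from by ring,
      ← mul_assoc, base_mul, ← huv, hg]
end
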